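/- arXiv:2404.16786 — 3 statements merged into one kernel-verified Lean document; each statement's English description precedes it below -/
import Mathlib

section
/- For all integers n ≥ 0 and 0 ≤ k ≤ n+1, one has k · S(n+1, k) = Σ_{ℓ=k-1}^{n} (-1)^{n-ℓ} · C(n+1, ℓ) · S(ℓ+1, k), where S(·,·) denotes the Stirling numbers of the second kind and C(·,·) the binomial coefficient. -/
/-- Stirling numbers of the second kind. -/
def stirling : ℕ → ℕ → ℕ
  | 0, 0 => 1
  | 0, _ + 1 => 0
  | _ + 1, 0 => 0
  | n + 1, k + 1 => (k + 1) * stirling n (k + 1) + stirling n k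

lemma stirling_eq_zero_of_lt : ∀ n k : ℕ, n < k → stirling n k = 0 := by
  intro n
  induction n with
  | zero => intro k hk; match k, hk with | k+1, _ => rfl
  | succ n ih =>
    intro k hk
    match k, hk with
    | k+1, hk =>
      show (k + 1) * stirling n (k + 1) + stirling n k = 0
      rw [ih (k+1) (by omega), ih k (by omega)]
      simp

lemma stirling_rec (n k : ℕ) :
    (stirling (n+2) k : ℤ) = (k : ℤ) * stirling (n+1) k + stirling (n+1) (k-1) := by
  cases k with
  | zero =>
    show ((0:ℕ):ℤ) = _
    rw [show stirling (n+1) 0 = 0 from rfl]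
    simp
  | succ k =>
    show (((k + 1) * stirling (n+1) (k + 1) + stirling (n+1) k : ℕ) : ℤ) = _
    rw [Nat.succ_sub_one]
    push_cast
    ring

lemma key (n : ℕ) : ∀ k : ℕ,
    ∑ ℓ ∈ Finset.range (n+1),
      (-1 : ℤ) ^ (n - ℓ) * ((n + 1).choose ℓ : ℤ) * (stirling (ℓ + 1) k : ℤ)
    = (k : ℤ) * stirling (n+1) k := by
  induction n with
  | zero =>
    intro k
    simp only [zero_add, Finset.sum_range_one, Nat.sub_zero, pow_zero, Nat.choose_zero_right]
    match k with
    | 0 => rw [show stirling 1 0 = 0 from rfl]; norm_num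
    | 1 => norm_num [stirling]
    | k+2 =>
      rw [stirling_eq_zero_of_lt 1 (k+2) (by omega)]
      simp
  | succ n ih =>
    intro k
    -- auxiliary sum U with binomial (n+1).choose
    have hU1 : ∑ ℓ ∈ Finset.range (n+2),
        (-1 : ℤ) ^ ((n+1) - ℓ) * ((n + 1).choose ℓ : ℤ) * (stirling (ℓ + 1) k : ℤ)
        = -((k : ℤ) * stirling (n+1) k) + stirling (n+2) k := by
      rw [Finset.sum_range_succ]
      have h1 : ∑ ℓ ∈ Finset.range (n+1),
          (-1 : ℤ) ^ ((n+1) - ℓ) * ((n + 1).choose ℓ : ℤ) * (stirling (ℓ + 1) k : ℤ)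
          = -∑ ℓ ∈ Finset.range (n+1),
          (-1 : ℤ) ^ (n - ℓ) * ((n + 1).choose ℓ : ℤ) * (stirling (ℓ + 1) k : ℤ) := by
        rw [← Finset.sum_neg_distrib]
        apply Finset.sum_congr rfl
        intro ℓ hℓ
        have hℓ' : ℓ ≤ n := by simpa [Nat.lt_succ_iff] using hℓ
        have he : (n+1) - ℓ = (n - ℓ) + 1 := by omega
        rw [he, pow_succ]
        ring
      rw [h1, ih k]
      simp [Nat.sub_self]
    have hU2 : ∑ ℓ ∈ Finset.range (n+2),
        (-1 : ℤ) ^ ((n+1) - ℓ) * ((n + 1).choose ℓ : ℤ) * (stirling (ℓ + 1) k : ℤ)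
        = (∑ m ∈ Finset.range (n+1),
            (-1 : ℤ) ^ (n - m) * ((n + 1).choose (m+1) : ℤ) * (stirling (m + 2) k : ℤ))
          + (-1 : ℤ) ^ (n+1) * (stirling 1 k : ℤ) := by
      rw [Finset.sum_range_succ']
      congr 1
      · apply Finset.sum_congr rfl
        intro m hm
        rw [Nat.succ_sub_succ]
      · simp
    have hB : ∑ m ∈ Finset.range (n+1),
        (-1 : ℤ) ^ (n - m) * ((n + 1).choose (m+1) : ℤ) * (stirling (m + 2) k : ℤ)
        = -((k : ℤ) * stirling (n+1) k) + stirling (n+2) k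
          - (-1 : ℤ) ^ (n+1) * (stirling 1 k : ℤ) := by
      rw [hU2] at hU1
      linarith [hU1]
    -- now the main computation
    rw [Finset.sum_range_succ']
    have hterm : ∀ m ∈ Finset.range (n+1),
        (-1 : ℤ) ^ ((n+1) - (m+1)) * ((n + 2).choose (m+1) : ℤ) * (stirling (m + 1 + 1) k : ℤ)
        = (k : ℤ) * ((-1 : ℤ) ^ (n - m) * ((n + 1).choose m : ℤ) * (stirling (m + 1) k : ℤ))
          + ((-1 : ℤ) ^ (n - m) * ((n + 1).choose m : ℤ) * (stirling (m + 1) (k-1) : ℤ))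
          + ((-1 : ℤ) ^ (n - m) * ((n + 1).choose (m+1) : ℤ) * (stirling (m + 2) k : ℤ)) := by
      intro m hm
      rw [Nat.succ_sub_succ]
      have e2 : (n + 2).choose (m+1) = (n+1).choose m + (n+1).choose (m+1) :=
        Nat.choose_succ_succ (n+1) m
      rw [e2]
      push_cast
      rw [show m + 1 + 1 = m + 2 from rfl, stirling_rec m k]
      ring
    rw [Finset.sum_congr rfl hterm, Finset.sum_add_distrib, Finset.sum_add_distrib,
      ← Finset.mul_sum, ih k, ih (k-1), hB]
    have hk' : ((k-1 : ℕ) : ℤ) * (stirling (n+1) (k-1) : ℤ)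
        = (k : ℤ) * (stirling (n+1) (k-1) : ℤ) - (stirling (n+1) (k-1) : ℤ) := by
      cases k with
      | zero =>
        rw [show stirling (n+1) (0-1) = 0 from rfl]
        simp
      | succ k =>
        rw [Nat.succ_sub_one]
        push_cast
        ring
    have hs := stirling_rec n k
    simp only [Nat.sub_zero, Nat.choose_zero_right, Nat.cast_one]
    linear_combination hk' + (1 - (k : ℤ)) * hs

theorem stirling_alternating_identity (n k : ℕ) (hk : k ≤ n + 1) :
    (k : ℤ) * stirling (n + 1) k =
      ∑ ℓ ∈ Finset.Icc (k - 1) n,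
        (-1 : ℤ) ^ (n - ℓ) * ((n + 1).choose ℓ : ℤ) * (stirling (ℓ + 1) k : ℤ) := by
  have hsum : ∑ ℓ ∈ Finset.Icc (k - 1) n,
      (-1 : ℤ) ^ (n - ℓ) * ((n + 1).choose ℓ : ℤ) * (stirling (ℓ + 1) k : ℤ)
      = ∑ ℓ ∈ Finset.range (n+1),
      (-1 : ℤ) ^ (n - ℓ) * ((n + 1).choose ℓ : ℤ) * (stirling (ℓ + 1) k : ℤ) := by
    apply Finset.sum_subset
    · intro x hx
      simp only [Finset.mem_Icc] at hx
      simp only [Finset.mem_range]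
      omega
    · intro x hx hx'
      simp only [Finset.mem_range] at hx
      simp only [Finset.mem_Icc] at hx'
      have hxk : x + 1 < k := by omega
      rw [stirling_eq_zero_of_lt (x+1) k hxk]
      simp
  rw [hsum, key n k]
end

section
/- Let F(n,m) be defined for n,m ≥ 0 by F(0,m) = 1 = F(n,0) and, for n,m ≥ 1, by F(n,m) = Σ_{ℓ=0}^{m} C(m+1,ℓ) · F(n-1,ℓ). Then F also satisfies the dual recursion F(n,m) = Σ_{k=0}^{n} C(n+1,k) · F(k,m-1) for all n ≥ 0 and m ≥ 1. -/
theorem mosaic_dual_recursion (F : ℕ → ℕ → ℕ)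
    (h0 : ∀ m, F 0 m = 1) (h0' : ∀ n, F n 0 = 1)
    (hrec : ∀ n m, 1 ≤ n → 1 ≤ m →
      F n m = ∑ ℓ ∈ Finset.range (m + 1), (m + 1).choose ℓ * F (n - 1) ℓ) :
    ∀ n m, 1 ≤ m → F n m = ∑ k ∈ Finset.range (n + 1), (n + 1).choose k * F k (m - 1) := by
  -- dual recursion follows from symmetry (up to the relevant level)
  have dual : ∀ s : ℕ, (∀ a b, a + b ≤ s → F a b = F b a) →
      ∀ N M, N + M + 1 ≤ s →
      F N (M + 1) = ∑ k ∈ Finset.range (N + 1), (N + 1).choose k * F k M := by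
    intro s hs N M hNM
    rcases Nat.eq_zero_or_pos N with hN | hN
    · subst hN
      simp [h0, Finset.sum_range_one]
    · rw [hs N (M + 1) (by omega), hrec (M + 1) N (by omega) hN]
      refine Finset.sum_congr rfl fun k hk => ?_
      rw [Finset.mem_range] at hk
      simp only [Nat.add_sub_cancel]
      rw [hs M k (by omega)]
  -- symmetry of F, by strong induction on n + m
  have sym : ∀ s n m, n + m ≤ s → F n m = F m n := by
    intro s
    induction s with
    | zero =>
      intro n m h
      obtain ⟨rfl, rfl⟩ : n = 0 ∧ m = 0 := by omega
      rfl
    | succ s ih =>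
      intro n m hnm
      by_cases hle : n + m ≤ s
      · exact ih n m hle
      have hsum : n + m = s + 1 := by omega
      have dual' : ∀ N M, N + M + 1 ≤ s →
          F N (M + 1) = ∑ k ∈ Finset.range (N + 1), (N + 1).choose k * F k M :=
        fun N M h => dual s ih N M h
      -- key decomposition
      have key : ∀ a b, a + b + 1 ≤ s →
          F (a + 1) (b + 1) = F b (a + 1) + F (b + 1) a +
            ∑ ℓ ∈ Finset.range (b + 1), ∑ k ∈ Finset.range (a + 1),
              (b + 1).choose ℓ * ((a + 1).choose k * F k ℓ) := by
        intro a b hab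
        rw [hrec (a + 1) (b + 1) (by omega) (by omega)]
        simp only [Nat.add_sub_cancel]
        rw [Finset.sum_range_succ']
        have e1 : ∑ ℓ ∈ Finset.range (b + 1), (b + 1 + 1).choose (ℓ + 1) * F a (ℓ + 1)
            = ∑ ℓ ∈ Finset.range (b + 1),
                ((b + 1).choose ℓ * F a (ℓ + 1) + (b + 1).choose (ℓ + 1) * F a (ℓ + 1)) := by
          refine Finset.sum_congr rfl fun ℓ _ => ?_
          rw [Nat.choose_succ_succ, add_mul]
        rw [e1, Finset.sum_add_distrib]
        have hX : ∑ ℓ ∈ Finset.range (b + 1), (b + 1).choose ℓ * F a (ℓ + 1)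
            = ∑ ℓ ∈ Finset.range (b + 1), ∑ k ∈ Finset.range (a + 1),
                (b + 1).choose ℓ * ((a + 1).choose k * F k ℓ) := by
          refine Finset.sum_congr rfl fun ℓ hℓ => ?_
          rw [Finset.mem_range] at hℓ
          rw [dual' a ℓ (by omega), Finset.mul_sum]
        have hY : ∑ ℓ ∈ Finset.range (b + 1), (b + 1).choose (ℓ + 1) * F a (ℓ + 1)
            + (b + 1 + 1).choose 0 * F a 0 = F b (a + 1) + F (b + 1) a := by
          have h2 : (b + 1 + 1).choose 0 * F a 0 = (b + 1).choose 0 * F a 0 := by simp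
          rw [h2, ← Finset.sum_range_succ' (fun ℓ => (b + 1).choose ℓ * F a ℓ) (b + 1),
            Finset.sum_range_succ]
          congr 1
          · rw [dual' b a (by omega)]
            refine Finset.sum_congr rfl fun ℓ hℓ => ?_
            rw [Finset.mem_range] at hℓ
            rw [ih a ℓ (by omega)]
          · rw [Nat.choose_self, one_mul, ih a (b + 1) (by omega)]
        rw [hX, add_assoc, hY]
        ring
      rcases n with _ | a
      · rw [h0, h0']
      rcases m with _ | b
      · rw [h0', h0]
      have hs' : a + b + 1 = s := by omega
      rw [key a b (le_of_eq hs'), key b a (by omega)]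
      have h1 : F b (a + 1) = F (a + 1) b := ih b (a + 1) (by omega)
      have h2 : F (b + 1) a = F a (b + 1) := ih (b + 1) a (by omega)
      have h3 : ∑ ℓ ∈ Finset.range (b + 1), ∑ k ∈ Finset.range (a + 1),
            (b + 1).choose ℓ * ((a + 1).choose k * F k ℓ)
          = ∑ ℓ ∈ Finset.range (a + 1), ∑ k ∈ Finset.range (b + 1),
            (a + 1).choose ℓ * ((b + 1).choose k * F k ℓ) := by
        rw [Finset.sum_comm]
        refine Finset.sum_congr rfl fun k hk => Finset.sum_congr rfl fun ℓ hℓ => ?_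
        rw [Finset.mem_range] at hk hℓ
        rw [ih k ℓ (by omega)]
        ring
      rw [h1, h2, h3]
      ring
  intro n m hm
  obtain ⟨M, rfl⟩ : ∃ M, m = M + 1 := ⟨m - 1, by omega⟩
  simpa using dual (n + M + 1) (fun a b h => sym (n + M + 1) a b h) n M le_rfl
end

section
/- In the universal enveloping algebra U(sl₂(ℂ)), let X = ef + (1/4)h², Y = e²f² − efh + (1/2)efh² + (1/16)h⁴ + ef, and Z = e²f² − efh + (1/2)efh² + (1/16)h⁴. Then X² = 2Y − Z. -/
private lemma sl2_aux {U : Type*} [Ring U] [Algebra ℂ U] (E F H : U)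
    (he : H * E = E * H + 2 * E)
    (hf : H * F = F * H - 2 * F)
    (hef : E * F = F * E + H) :
    (E * F + (4 : ℂ)⁻¹ • H ^ 2) ^ 2 =
      2 * (E ^ 2 * F ^ 2 - E * F * H + (2 : ℂ)⁻¹ • (E * F * H ^ 2) + (16 : ℂ)⁻¹ • H ^ 4
        + E * F)
      - (E ^ 2 * F ^ 2 - E * F * H + (2 : ℂ)⁻¹ • (E * F * H ^ 2) + (16 : ℂ)⁻¹ • H ^ 4) := by
  have h1 : E * F * (E * F) = E ^ 2 * F ^ 2 - E * F * H + E * F + E * F := by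
    linear_combination (norm := noncomm_ring) (-(E * hf) - E * hef * F)
  have h2 : H ^ 2 * (E * F) = E * F * H ^ 2 := by
    linear_combination (norm := noncomm_ring)
      ((E * hf + he * F) * H + H * (E * hf + he * F))
  have hsq : (E * F + (4 : ℂ)⁻¹ • H ^ 2) ^ 2
      = E * F * (E * F) + (4 : ℂ)⁻¹ • (E * F * H ^ 2) + (4 : ℂ)⁻¹ • (H ^ 2 * (E * F))
        + ((4 : ℂ)⁻¹ * (4 : ℂ)⁻¹) • (H ^ 2 * H ^ 2) := by
    simp only [sq, mul_add, add_mul, smul_add, smul_mul_assoc, mul_smul_comm, smul_smul]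
    abel
  have h4 : H ^ 2 * H ^ 2 = H ^ 4 := by noncomm_ring
  rw [hsq, h1, h2, h4, two_mul]
  module

attribute [local instance 100] LieRing.ofAssociativeRing

theorem sl2_enriquez_counterexample (L : Type*) [LieRing L] [LieAlgebra ℂ L] (e f h : L)
    (hhe : ⁅h, e⁆ = (2 : ℂ) • e) (hhf : ⁅h, f⁆ = (-2 : ℂ) • f) (hef : ⁅e, f⁆ = h) :
    let E := UniversalEnvelopingAlgebra.ι ℂ e
    let F := UniversalEnvelopingAlgebra.ι ℂ f
    let H := UniversalEnvelopingAlgebra.ι ℂ h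
    let X := E * F + (4 : ℂ)⁻¹ • H ^ 2
    let Y := E ^ 2 * F ^ 2 - E * F * H + (2 : ℂ)⁻¹ • (E * F * H ^ 2) + (16 : ℂ)⁻¹ • H ^ 4
      + E * F
    let Z := E ^ 2 * F ^ 2 - E * F * H + (2 : ℂ)⁻¹ • (E * F * H ^ 2) + (16 : ℂ)⁻¹ • H ^ 4
    X ^ 2 = 2 * Y - Z := by
  intro E F H X Y Z
  have key := fun (x y : L) => ((UniversalEnvelopingAlgebra.ι ℂ (L := L)).map_lie x y).symm
  have hE : ⁅H, E⁆ = (2 : ℂ) • E := by rw [key, hhe, map_smul]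
  have hF : ⁅H, F⁆ = (-2 : ℂ) • F := by rw [key, hhf, map_smul]
  have hEF : ⁅E, F⁆ = H := by rw [key, hef]
  rw [Ring.lie_def] at hE hF hEF
  have c2 : ∀ u : UniversalEnvelopingAlgebra ℂ L, (2 : ℂ) • u = 2 * u := by
    intro u
    rw [Algebra.smul_def, map_ofNat]
  rw [c2] at hE
  rw [neg_smul, c2] at hF
  have he' : H * E = E * H + 2 * E := by
    linear_combination (norm := noncomm_ring) hE
  have hf' : H * F = F * H - 2 * F := by
    linear_combination (norm := noncomm_ring) hF
  have hef' : E * F = F * E + H := by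
    linear_combination (norm := noncomm_ring) hEF
  exact sl2_aux E F H he' hf' hef'
end
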